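/- Suppose f : ℂP¹ → ℂP¹ and f′ : ℂP¹ → ℂP¹ are the rational maps induced by polynomials P_{a} and P_{a′} (antiderivatives of ζ²(ζ−1)³∏(ζ−a_j) resp. ζ²(ζ−1)³∏(ζ−a′_j)), with all parameters satisfying |a_j − 2j| < 1 and |a′_j − 2j| < 1. If there is a Möbius transformation μ with f′ = f ∘ μ sending the critical set of f′ to that of f preserving multiplicities, then μ fixes 0, 1, ∞ (being the unique critical points of multiplicities 2, 3, N+5 respectively), hence μ = id and a = a′. -/

import Mathlib

open Polynomial OnePoint

private lemma disk_ne {b : ℂ} {j : ℕ} (h : ‖b - 2 * ((j : ℕ) + 1)‖ < 1) :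
    b ≠ 0 ∧ b ≠ 1 := by
  have hj : (0 : ℝ) ≤ (j : ℝ) := Nat.cast_nonneg j
  constructor
  · rintro rfl
    have he : ((0 : ℂ) - 2 * ((j : ℕ) + 1)) = ((-(2 * ((j : ℝ) + 1)) : ℝ) : ℂ) := by
      push_cast; ring
    rw [he, Complex.norm_real, Real.norm_eq_abs, abs_lt] at h
    nlinarith [h.1, h.2]
  · rintro rfl
    have he : ((1 : ℂ) - 2 * ((j : ℕ) + 1)) = (((1 - 2 * ((j : ℝ) + 1)) : ℝ) : ℂ) := by
      push_cast; ring
    rw [he, Complex.norm_real, Real.norm_eq_abs, abs_lt] at h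
    nlinarith [h.1, h.2]

private lemma disk_eq {b c : ℂ} {i j : ℕ}
    (hb : ‖b - 2 * ((i : ℕ) + 1)‖ < 1)
    (hc : ‖c - 2 * ((j : ℕ) + 1)‖ < 1) (h : b = c) : i = j := by
  subst h
  have key : ‖(2 * ((i : ℂ) + 1)) - 2 * ((j : ℂ) + 1)‖ < 2 := by
    calc ‖(2 * ((i : ℂ) + 1)) - 2 * ((j : ℂ) + 1)‖
        = ‖(2 * ((i : ℂ) + 1) - b) + (b - 2 * ((j : ℂ) + 1))‖ := by ring_nf
      _ ≤ ‖2 * ((i : ℂ) + 1) - b‖ + ‖b - 2 * ((j : ℂ) + 1)‖ :=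
          norm_add_le _ _
      _ = ‖b - 2 * ((i : ℂ) + 1)‖ + ‖b - 2 * ((j : ℂ) + 1)‖ := by
          rw [← norm_neg (2 * ((i : ℂ) + 1) - b)]; ring_nf
      _ < 1 + 1 := by exact add_lt_add hb hc
      _ = 2 := by norm_num
  have he : ((2 * ((i : ℂ) + 1)) - 2 * ((j : ℂ) + 1)) = (((2 * ((i : ℤ) - (j : ℤ)) : ℤ) : ℝ) : ℂ) := by
    push_cast; ring
  rw [he, Complex.norm_real, Real.norm_eq_abs] at key
  have h2 : |(2 * ((i : ℤ) - (j : ℤ)) : ℤ)| < 2 := by exact_mod_cast key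
  rw [abs_lt] at h2
  omega

private lemma multQ (N : ℕ) (b : Fin N → ℂ) (w : ℂ) :
    rootMultiplicity w (X ^ 2 * (X - 1) ^ 3 * ∏ j : Fin N, (X - C (b j))) =
      (if w = 0 then 2 else 0) + (if w = 1 then 3 else 0)
        + (Finset.univ.filter (fun j => w = b j)).card := by
  classical
  have h2 : (X ^ 2 : ℂ[X]) ≠ 0 := pow_ne_zero _ X_ne_zero
  have hX1 : (X - 1 : ℂ[X]) ≠ 0 := by
    simpa using X_sub_C_ne_zero (1 : ℂ)
  have h3 : ((X - 1 : ℂ[X]) ^ 3) ≠ 0 := pow_ne_zero _ hX1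
  have hp : (∏ j : Fin N, (X - C (b j)) : ℂ[X]) ≠ 0 :=
    Finset.prod_ne_zero_iff.mpr fun j _ => X_sub_C_ne_zero _
  have hQ : (X ^ 2 * (X - 1) ^ 3 * ∏ j : Fin N, (X - C (b j)) : ℂ[X]) ≠ 0 :=
    mul_ne_zero (mul_ne_zero h2 h3) hp
  have hroots1 : (X - 1 : ℂ[X]).roots = {1} := by
    simpa using Polynomial.roots_X_sub_C (1 : ℂ)
  rw [← Polynomial.count_roots, Polynomial.roots_mul hQ,
    Polynomial.roots_mul (mul_ne_zero h2 h3), Polynomial.roots_pow, Polynomial.roots_pow,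
    Polynomial.roots_X, hroots1, Polynomial.roots_prod _ _ hp]
  have hb : (Finset.univ.val.bind fun j : Fin N => (X - C (b j)).roots)
      = Multiset.map b Finset.univ.val := by
    simp only [Polynomial.roots_X_sub_C]
    exact Multiset.bind_singleton _ _
  rw [hb]
  simp only [Multiset.count_add, Multiset.count_nsmul, Multiset.count_singleton,
    Multiset.count_map]
  have hc : (Finset.filter (fun j => w = b j) Finset.univ).card
      = Multiset.card (Multiset.filter (fun a => w = b a) Finset.univ.val) := rfl
  rw [hc]
  split_ifs <;> omega

/-- let `f, f' : ℂP¹ → ℂP¹` be the extensions (by `∞ ↦ ∞`) of the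
antiderivatives `P_a, P_{a'}` of `ζ²(ζ−1)³∏(ζ−a_j)` resp. `ζ²(ζ−1)³∏(ζ−a'_j)`,
with `|a_j − 2j| < 1` and `|a'_j − 2j| < 1`.  Let `m, m'` be the critical
multiplicity functions (`m(z)` = multiplicity of `z` as a root of `P'_a` at
finite points, `m(∞) = N+5`).  If `μ` is a Möbius transformation with
`f' = f ∘ μ` sending the critical set of `f'` to that of `f` preserving
multiplicities (`m' = m ∘ μ`), then `μ` fixes `0`, `1` and `∞` (these being the
unique critical points of multiplicities `2`, `3`, `N+5`), hence `μ = id` and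
`a = a'`. -/
theorem stmt_19 (N : ℕ) (a a' : Fin N → ℂ)
    (ha : ∀ j : Fin N, ‖a j - 2 * ((j : ℕ) + 1)‖ < 1)
    (ha' : ∀ j : Fin N, ‖a' j - 2 * ((j : ℕ) + 1)‖ < 1)
    (P P' : Polynomial ℂ)
    (hP0 : P.eval 0 = 0)
    (hP : P.derivative = X ^ 2 * (X - 1) ^ 3 * ∏ j : Fin N, (X - C (a j)))
    (hP'0 : P'.eval 0 = 0)
    (hP' : P'.derivative = X ^ 2 * (X - 1) ^ 3 * ∏ j : Fin N, (X - C (a' j)))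
    (f f' : OnePoint ℂ → OnePoint ℂ)
    (hfinf : f ∞ = ∞) (hffin : ∀ z : ℂ, f (z : OnePoint ℂ) = ((P.eval z : ℂ) : OnePoint ℂ))
    (hf'inf : f' ∞ = ∞) (hf'fin : ∀ z : ℂ, f' (z : OnePoint ℂ) = ((P'.eval z : ℂ) : OnePoint ℂ))
    (μ : OnePoint ℂ → OnePoint ℂ)
    (hμ : ∃ α β γ δ : ℂ, α * δ - β * γ ≠ 0 ∧
      (∀ z : ℂ, (γ * z + δ ≠ 0 →
          μ (z : OnePoint ℂ) = (((α * z + β) / (γ * z + δ) : ℂ) : OnePoint ℂ)) ∧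
        (γ * z + δ = 0 → μ (z : OnePoint ℂ) = ∞)) ∧
      (γ = 0 → μ ∞ = ∞) ∧ (γ ≠ 0 → μ ∞ = ((α / γ : ℂ) : OnePoint ℂ)))
    (hcomp : ∀ z : OnePoint ℂ, f' z = f (μ z))
    (m m' : OnePoint ℂ → ℕ)
    (hminf : m ∞ = N + 5)
    (hmfin : ∀ z : ℂ, m (z : OnePoint ℂ) = Polynomial.rootMultiplicity z P.derivative)
    (hm'inf : m' ∞ = N + 5)
    (hm'fin : ∀ z : ℂ, m' (z : OnePoint ℂ) = Polynomial.rootMultiplicity z P'.derivative)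
    (hcrit : ∀ z : OnePoint ℂ, m' z = m (μ z)) :
    μ ((0 : ℂ) : OnePoint ℂ) = ((0 : ℂ) : OnePoint ℂ) ∧
    μ ((1 : ℂ) : OnePoint ℂ) = ((1 : ℂ) : OnePoint ℂ) ∧
    μ ∞ = ∞ ∧ (∀ z : OnePoint ℂ, μ z = z) ∧ a = a' := by
  classical
  -- basic facts about the parameters
  have ha0 : ∀ j, a j ≠ 0 := fun j => (disk_ne (ha j)).1
  have ha1 : ∀ j, a j ≠ 1 := fun j => (disk_ne (ha j)).2
  have ha'0 : ∀ j, a' j ≠ 0 := fun j => (disk_ne (ha' j)).1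
  have ha'1 : ∀ j, a' j ≠ 1 := fun j => (disk_ne (ha' j)).2
  have hainj : Function.Injective a := by
    intro i j hij
    exact Fin.ext (disk_eq (ha i) (ha j) hij)
  -- multiplicity computations
  have hmw : ∀ w : ℂ, m (w : OnePoint ℂ) =
      (if w = 0 then 2 else 0) + (if w = 1 then 3 else 0)
        + (Finset.univ.filter (fun j => w = a j)).card := by
    intro w; rw [hmfin, hP, multQ]
  have hm'w : ∀ w : ℂ, m' (w : OnePoint ℂ) =
      (if w = 0 then 2 else 0) + (if w = 1 then 3 else 0)
        + (Finset.univ.filter (fun j => w = a' j)).card := by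
    intro w; rw [hm'fin, hP', multQ]
  have hcard_a : ∀ w : ℂ, (Finset.univ.filter (fun j => w = a j)).card ≤ 1 := by
    intro w
    refine Finset.card_le_one.mpr fun i hi j hj => ?_
    simp only [Finset.mem_filter] at hi hj
    exact hainj (hi.2.symm.trans hj.2)
  have hcard_a0 : (Finset.univ.filter (fun j => (0 : ℂ) = a j)).card = 0 := by
    rw [Finset.card_eq_zero, Finset.filter_eq_empty_iff]
    exact fun j _ h => ha0 j h.symm
  have hcard_a1 : (Finset.univ.filter (fun j => (1 : ℂ) = a j)).card = 0 := by
    rw [Finset.card_eq_zero, Finset.filter_eq_empty_iff]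
    exact fun j _ h => ha1 j h.symm
  have hcard_a'0 : (Finset.univ.filter (fun j => (0 : ℂ) = a' j)).card = 0 := by
    rw [Finset.card_eq_zero, Finset.filter_eq_empty_iff]
    exact fun j _ h => ha'0 j h.symm
  have hcard_a'1 : (Finset.univ.filter (fun j => (1 : ℂ) = a' j)).card = 0 := by
    rw [Finset.card_eq_zero, Finset.filter_eq_empty_iff]
    exact fun j _ h => ha'1 j h.symm
  -- m at finite points is at most 3
  have hmle : ∀ w : ℂ, m (w : OnePoint ℂ) ≤ 3 := by
    intro w
    rw [hmw]
    by_cases h0 : w = 0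
    · subst h0; simp [hcard_a0]
    · by_cases h1 : w = 1
      · subst h1; simp [hcard_a1, h0]
      · simp only [h0, h1, if_false]
        have := hcard_a w
        omega
  -- m = 2 only at 0, m = 3 only at 1
  have hm_eq2 : ∀ w : ℂ, m (w : OnePoint ℂ) = 2 → w = 0 := by
    intro w hw
    by_contra h0
    rw [hmw] at hw
    by_cases h1 : w = 1
    · subst h1; simp [hcard_a1, h0] at hw
    · simp only [h0, h1, if_false] at hw
      have := hcard_a w
      omega
  have hm_eq3 : ∀ w : ℂ, m (w : OnePoint ℂ) = 3 → w = 1 := by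
    intro w hw
    by_contra h1
    rw [hmw] at hw
    by_cases h0 : w = 0
    · subst h0; simp [hcard_a0] at hw
    · simp only [h0, h1, if_false] at hw
      have := hcard_a w
      omega
  -- μ fixes ∞
  have hμinf : μ ∞ = ∞ := by
    have h := hcrit ∞
    rw [hm'inf] at h
    cases hh : μ ∞ with
    | infty => rfl
    | coe w =>
      rw [hh] at h
      have := hmle w
      omega
  -- extract the Möbius data
  obtain ⟨α, β, γ, δ, hdet, hfin, hγ0, hγn⟩ := hμ
  have hγ : γ = 0 := by
    by_contra hγ
    have := hγn hγ
    rw [hμinf] at this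
    exact (OnePoint.coe_ne_infty _) this.symm
  subst hγ
  have hαδ : α * δ ≠ 0 := by simpa using hdet
  have hδ : δ ≠ 0 := fun h => hαδ (by rw [h, mul_zero])
  have hform : ∀ z : ℂ, μ (z : OnePoint ℂ) = (((α * z + β) / δ : ℂ) : OnePoint ℂ) := by
    intro z
    have hne : (0 : ℂ) * z + δ ≠ 0 := by simpa using hδ
    have := (hfin z).1 hne
    simpa using this
  -- μ fixes 0
  have hμ0 : μ ((0 : ℂ) : OnePoint ℂ) = ((0 : ℂ) : OnePoint ℂ) := by
    have h := hcrit ((0 : ℂ) : OnePoint ℂ)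
    rw [hm'w] at h
    norm_num [hcard_a'0] at h
    rw [hform 0] at h
    have h2 : m ((((α * 0 + β) / δ : ℂ)) : OnePoint ℂ) = 2 := by omega
    have := hm_eq2 _ h2
    rw [hform 0, this]
  have hβ : β = 0 := by
    have h := hμ0
    rw [hform 0, OnePoint.coe_eq_coe, mul_zero, zero_add, _root_.div_eq_zero_iff] at h
    exact h.resolve_right hδ
  subst hβ
  -- μ fixes 1
  have hμ1 : μ ((1 : ℂ) : OnePoint ℂ) = ((1 : ℂ) : OnePoint ℂ) := by
    have h := hcrit ((1 : ℂ) : OnePoint ℂ)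
    rw [hm'w] at h
    norm_num [hcard_a'1] at h
    rw [hform 1] at h
    have h3 : m ((((α * 1 + 0) / δ : ℂ)) : OnePoint ℂ) = 3 := by omega
    have := hm_eq3 _ h3
    rw [hform 1, this]
  have hαδeq : α = δ := by
    have h := hμ1
    rw [hform 1, OnePoint.coe_eq_coe, mul_one, add_zero, div_eq_one_iff_eq hδ] at h
    exact h
  -- μ is the identity
  have hid : ∀ z : OnePoint ℂ, μ z = z := by
    intro z
    cases z with
    | infty => exact hμinf
    | coe z =>
      rw [hform z]
      have : (α * z + 0) / δ = z := by
        rw [hαδeq, add_zero, mul_comm, mul_div_assoc, div_self hδ, mul_one]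
      rw [this]
  -- hence P' = P
  have hPP : P' = P := Polynomial.funext fun z => by
    have h := hcomp (z : OnePoint ℂ)
    rw [hid, hffin, hf'fin, OnePoint.coe_eq_coe] at h
    exact h
  -- cancel the common factor
  have h2 : (X ^ 2 : ℂ[X]) ≠ 0 := pow_ne_zero _ X_ne_zero
  have hX1 : (X - 1 : ℂ[X]) ≠ 0 := by simpa using X_sub_C_ne_zero (1 : ℂ)
  have hprod : (∏ j : Fin N, (X - C (a j))) = ∏ j : Fin N, (X - C (a' j)) :=
    mul_left_cancel₀ (mul_ne_zero h2 (pow_ne_zero _ hX1)) (by rw [← hP, ← hP', hPP])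
  -- conclude a = a'
  have haa : a = a' := by
    funext j
    have hroot : eval (a j) (∏ i : Fin N, (X - C (a' i))) = 0 := by
      rw [← hprod, eval_prod]
      exact Finset.prod_eq_zero (Finset.mem_univ j) (by simp)
    rw [eval_prod] at hroot
    obtain ⟨i, -, hi⟩ := Finset.prod_eq_zero_iff.mp hroot
    have hi' : a j = a' i := by
      simpa [sub_eq_zero] using hi
    have hij : (j : ℕ) = (i : ℕ) := disk_eq (ha j) (ha' i) hi'
    rw [hi', Fin.ext hij]
  exact ⟨hμ0, hμ1, hμinf, hid, haa⟩
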